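/- Let f be a continuous l-modal map of [a,b] into itself. For n ≥ 1, the lap number of f^n satisfies ℓ_n = ℓ_{n-1} + s_{n-1}, where s_ν = Σ_{i=1}^l s_ν^i and s_ν^i counts the interior simple zeros of f^ν(x) - c_i; consequently ℓ_n = 1 + Σ_{ν=0}^{n-1} s_ν. -/

import Mathlib

/-- The `j`-th maximal monotonicity interval of an `l`-modal map on `[a,b]` with
turning points `c 1 < ... < c l`: `I_1 = [a, c 1)`, `I_{l+1} = (c l, b]`, and
`I_j = (c (j-1), c j)` otherwise. -/
def modalInterval (a b : ℝ) (l : ℕ) (c : ℕ → ℝ) (j : ℕ) : Set ℝ :=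
  if j = 1 then Set.Ico a (c 1)
  else if j = l + 1 then Set.Ioc (c l) b
  else Set.Ioo (c (j - 1)) (c j)

/-- `m` is the lap number of `g` on `[a,b]`: the least number of pieces in a
partition `a = t 0 < t 1 < ... < t m = b` such that `g` is monotone on each piece. -/
def IsLapNumber (g : ℝ → ℝ) (a b : ℝ) (m : ℕ) : Prop :=
  IsLeast {k : ℕ | ∃ t : ℕ → ℝ, t 0 = a ∧ t k = b ∧ (∀ i < k, t i < t (i + 1)) ∧
    ∀ i < k, MonotoneOn g (Set.Icc (t i) (t (i + 1))) ∨
      AntitoneOn g (Set.Icc (t i) (t (i + 1)))} m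

/-- `g` crosses the level `y = c` transversally at `x`. -/
def CrossesAt (g : ℝ → ℝ) (c x : ℝ) : Prop :=
  g x = c ∧ ∃ ε > 0,
    ((∀ y ∈ Set.Ioo (x - ε) x, g y < c) ∧ (∀ y ∈ Set.Ioo x (x + ε), c < g y)) ∨
    ((∀ y ∈ Set.Ioo (x - ε) x, c < g y) ∧ (∀ y ∈ Set.Ioo x (x + ε), g y < c))

/-- The set of interior simple zeros of `f^ν(x) - c`: points `x ∈ (a,b)` whose
orbit avoids `c` before time `ν` and such that `f^ν` crosses the level `c`
transversally at `x`. -/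
def SimpleZeroSet (f : ℝ → ℝ) (a b c : ℝ) (ν : ℕ) : Set ℝ :=
  {x ∈ Set.Ioo a b | (∀ μ < ν, f^[μ] x ≠ c) ∧ CrossesAt (f^[ν]) c x}

open Set in
section
open Set


namespace LapNumAux

/-- Closure of strict monotonicity: strictly monotone on the open interval and
continuous on the closed interval implies strictly monotone on the closed one. -/
lemma strictMonoOn_Icc_of_Ioo {g : ℝ → ℝ} {u v : ℝ} (huv : u < v)
    (hg : ContinuousOn g (Icc u v))
    (hm : ∀ ⦃x⦄, x ∈ Ioo u v → ∀ ⦃y⦄, y ∈ Ioo u v → x < y → g x < g y) :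
    StrictMonoOn g (Icc u v) := by
  have hneBotL : (nhdsWithin u (Ioo u v)).NeBot := by
    rw [← mem_closure_iff_nhdsWithin_neBot, closure_Ioo huv.ne]
    exact ⟨le_refl u, huv.le⟩
  have hneBotR : (nhdsWithin v (Ioo u v)).NeBot := by
    rw [← mem_closure_iff_nhdsWithin_neBot, closure_Ioo huv.ne]
    exact ⟨huv.le, le_refl v⟩
  intro x hx y hy hxy
  set z := x + (y - x) / 3 with hz
  set w := x + 2 * ((y - x) / 3) with hw
  have hxz : x < z := by simp only [hz]; linarith
  have hzw : z < w := by simp only [hz, hw]; linarith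
  have hwy : w < y := by simp only [hw]; linarith
  have hzI : z ∈ Ioo u v := ⟨lt_of_le_of_lt hx.1 hxz, lt_of_lt_of_le (hzw.trans hwy) hy.2⟩
  have hwI : w ∈ Ioo u v := ⟨lt_of_le_of_lt hx.1 (hxz.trans hzw), lt_of_lt_of_le hwy hy.2⟩
  have h1 : g x ≤ g z := by
    rcases eq_or_lt_of_le hx.1 with he | hlt
    · -- x = u : limit argument
      have htds : Filter.Tendsto g (nhdsWithin u (Ioo u v)) (nhds (g u)) := by
        have := (hg u ⟨le_refl u, huv.le⟩)
        exact this.tendsto.mono_left (nhdsWithin_mono u Ioo_subset_Icc_self)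
      have hev : ∀ᶠ t in nhdsWithin u (Ioo u v), g t ≤ g z := by
        filter_upwards [self_mem_nhdsWithin,
          mem_nhdsWithin_of_mem_nhds (Iio_mem_nhds (he ▸ hxz))] with t ht ht2
        exact (hm ht hzI ht2).le
      rw [← he]
      exact le_of_tendsto htds hev
    · exact (hm ⟨hlt, lt_of_lt_of_le (hxz.trans (hzw.trans hwy)) hy.2⟩ hzI hxz).le
  have h2 : g w ≤ g y := by
    rcases eq_or_lt_of_le hy.2 with he | hlt
    · have htds : Filter.Tendsto g (nhdsWithin v (Ioo u v)) (nhds (g v)) := by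
        have := (hg v ⟨huv.le, le_refl v⟩)
        exact this.tendsto.mono_left (nhdsWithin_mono v Ioo_subset_Icc_self)
      have hev : ∀ᶠ t in nhdsWithin v (Ioo u v), g w ≤ g t := by
        filter_upwards [self_mem_nhdsWithin,
          mem_nhdsWithin_of_mem_nhds (Ioi_mem_nhds (he ▸ hwy))] with t ht ht2
        exact (hm hwI ht ht2).le
      rw [he]
      exact ge_of_tendsto htds hev
    · exact (hm hwI ⟨lt_of_le_of_lt hx.1 (hxz.trans (hzw.trans hwy)), hlt⟩ hwy).le
  exact lt_of_le_of_lt h1 (lt_of_lt_of_le (hm hzI hwI hzw) h2)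

lemma strictAntiOn_Icc_of_Ioo {g : ℝ → ℝ} {u v : ℝ} (huv : u < v)
    (hg : ContinuousOn g (Icc u v))
    (hm : ∀ ⦃x⦄, x ∈ Ioo u v → ∀ ⦃y⦄, y ∈ Ioo u v → x < y → g y < g x) :
    StrictAntiOn g (Icc u v) := by
  have := strictMonoOn_Icc_of_Ioo huv (hg.neg)
    (fun x hx y hy hxy => by simpa using neg_lt_neg (hm hx hy hxy))
  intro x hx y hy hxy
  have := this hx hy hxy
  simpa using this

/-- composing strict mono/anti pieces -/
lemma monoOrAnti_comp {g h : ℝ → ℝ} {I D : Set ℝ} (hmaps : MapsTo g I D)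
    (hg : StrictMonoOn g I ∨ StrictAntiOn g I)
    (hh : StrictMonoOn h D ∨ StrictAntiOn h D) :
    StrictMonoOn (h ∘ g) I ∨ StrictAntiOn (h ∘ g) I := by
  rcases hg with hg | hg <;> rcases hh with hh | hh
  · exact Or.inl fun x hx y hy hxy => hh (hmaps hx) (hmaps hy) (hg hx hy hxy)
  · exact Or.inr fun x hx y hy hxy => hh (hmaps hx) (hmaps hy) (hg hx hy hxy)
  · exact Or.inr fun x hx y hy hxy => hh (hmaps hy) (hmaps hx) (hg hx hy hxy)
  · exact Or.inl fun x hx y hy hxy => hh (hmaps hy) (hmaps hx) (hg hx hy hxy)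

/-- gap to the left of a point avoiding a finite set -/
lemma exists_gap_lt (F : Finset ℝ) {a x : ℝ} (hax : a < x) :
    ∃ p, a ≤ p ∧ p < x ∧ ∀ z ∈ F, z ∉ Ioo p x := by
  classical
  set G := insert a (F.filter (fun z => z < x)) with hG
  have hne : G.Nonempty := Finset.insert_nonempty _ _
  refine ⟨G.max' hne, Finset.le_max' _ _ (Finset.mem_insert_self _ _), ?_, ?_⟩
  · rw [Finset.max'_lt_iff]
    intro y hy
    rcases Finset.mem_insert.mp hy with h | h
    · exact h ▸ hax
    · exact (Finset.mem_filter.mp h).2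
  · intro z hz hmem
    have : z ∈ G := Finset.mem_insert_of_mem (Finset.mem_filter.mpr ⟨hz, hmem.2⟩)
    exact absurd (Finset.le_max' _ _ this) (not_le.mpr hmem.1)

lemma exists_gap_gt (F : Finset ℝ) {b x : ℝ} (hxb : x < b) :
    ∃ q, q ≤ b ∧ x < q ∧ ∀ z ∈ F, z ∉ Ioo x q := by
  classical
  set G := insert b (F.filter (fun z => x < z)) with hG
  have hne : G.Nonempty := Finset.insert_nonempty _ _
  refine ⟨G.min' hne, Finset.min'_le _ _ (Finset.mem_insert_self _ _), ?_, ?_⟩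
  · rw [Finset.lt_min'_iff]
    intro y hy
    rcases Finset.mem_insert.mp hy with h | h
    · exact h ▸ hxb
    · exact (Finset.mem_filter.mp h).2
  · intro z hz hmem
    have : z ∈ G := Finset.mem_insert_of_mem (Finset.mem_filter.mpr ⟨hz, hmem.1⟩)
    exact absurd (Finset.min'_le _ _ this) (not_le.mpr hmem.2)

/-- chain monotonicity of a partition -/
lemma chain_mono {t : ℕ → ℝ} {m : ℕ} (h : ∀ i < m, t i < t (i + 1)) :
    ∀ i j, i < j → j ≤ m → t i < t j := by
  intro i j hij hjm
  induction j with
  | zero => omega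
  | succ j ih =>
    rcases Nat.lt_succ_iff_lt_or_eq.mp hij with h' | h'
    · exact (ih h' (by omega)).trans (h j (by omega))
    · exact h' ▸ h j (by omega)

end LapNumAux

namespace LapNumAux

/-- left endpoint of `j`-th closed component -/
noncomputable def comL (a : ℝ) (c : ℕ → ℝ) (j : ℕ) : ℝ := if j = 1 then a else c (j - 1)
/-- right endpoint of `j`-th closed component -/
noncomputable def comR (b : ℝ) (l : ℕ) (c : ℕ → ℝ) (j : ℕ) : ℝ := if j = l + 1 then b else c j

lemma comL_one (a : ℝ) (c : ℕ → ℝ) : comL a c 1 = a := if_pos rfl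
lemma comL_ne {j : ℕ} (h : j ≠ 1) (a : ℝ) (c : ℕ → ℝ) : comL a c j = c (j - 1) := if_neg h
lemma comR_last (b : ℝ) (l : ℕ) (c : ℕ → ℝ) : comR b l c (l + 1) = b := if_pos rfl
lemma comR_ne {j l : ℕ} (h : j ≠ l + 1) (b : ℝ) (c : ℕ → ℝ) : comR b l c j = c j := if_neg h

structure Setup (a b : ℝ) (l : ℕ) (c : ℕ → ℝ) (f : ℝ → ℝ) : Prop where
  hab : a < b
  hl : 1 ≤ l
  hc : ∀ i, 1 ≤ i → i < l → c i < c (i + 1)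
  hca : a < c 1
  hcb : c l < b
  hcont : ContinuousOn f (Set.Icc a b)
  hmaps : Set.MapsTo f (Set.Icc a b) (Set.Icc a b)
  hmono : ∀ j, 1 ≤ j → j ≤ l + 1 → Odd j → StrictMonoOn f (modalInterval a b l c j)
  hanti : ∀ j, 1 ≤ j → j ≤ l + 1 → Even j → StrictAntiOn f (modalInterval a b l c j)

namespace Setup

variable {a b : ℝ} {l : ℕ} {c : ℕ → ℝ} {f : ℝ → ℝ} (S : Setup a b l c f)
include S

lemma cmono : ∀ i j, 1 ≤ i → i < j → j ≤ l → c i < c j := by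
  intro i j h1 hij hjl
  induction j with
  | zero => omega
  | succ j ih =>
    rcases Nat.lt_succ_iff_lt_or_eq.mp hij with h' | h'
    · exact (ih h' (by omega)).trans (S.hc j (by omega) (by omega))
    · exact h' ▸ S.hc i h1 (by omega)

lemma level_gt_a {i : ℕ} (h1 : 1 ≤ i) (h2 : i ≤ l) : a < c i := by
  rcases eq_or_lt_of_le h1 with he | hlt
  · exact he ▸ S.hca
  · exact S.hca.trans (S.cmono 1 i le_rfl hlt h2)

lemma level_lt_b {i : ℕ} (h1 : 1 ≤ i) (h2 : i ≤ l) : c i < b := by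
  rcases eq_or_lt_of_le h2 with he | hlt
  · exact he ▸ S.hcb
  · exact (S.cmono i l h1 hlt le_rfl).trans S.hcb

lemma a_le_comL {j : ℕ} (h1 : 1 ≤ j) (h2 : j ≤ l + 1) : a ≤ comL a c j := by
  rcases eq_or_ne j 1 with hj | hj
  · rw [hj, comL_one]
  · rw [comL_ne hj]
    exact (S.level_gt_a (by omega) (by omega)).le

lemma comR_le_b {j : ℕ} (h1 : 1 ≤ j) (h2 : j ≤ l + 1) : comR b l c j ≤ b := by
  rcases eq_or_ne j (l + 1) with hj | hj
  · rw [hj, comR_last]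
  · rw [comR_ne hj]
    exact (S.level_lt_b (by omega) (by omega)).le

lemma comL_lt_comR {j : ℕ} (h1 : 1 ≤ j) (h2 : j ≤ l + 1) : comL a c j < comR b l c j := by
  have hl := S.hl
  rcases eq_or_ne j 1 with hj | hj
  · subst hj
    rw [comL_one, comR_ne (by omega)]
    exact S.hca
  · rw [comL_ne hj]
    rcases eq_or_ne j (l + 1) with hj' | hj'
    · subst hj'
      rw [comR_last]
      simpa using S.hcb
    · rw [comR_ne hj']
      exact S.cmono (j - 1) j (by omega) (by omega) (by omega)

lemma Ioo_subset_modal {j : ℕ} (h1 : 1 ≤ j) (h2 : j ≤ l + 1) :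
    Ioo (comL a c j) (comR b l c j) ⊆ modalInterval a b l c j := by
  have hl := S.hl
  unfold modalInterval
  rcases eq_or_ne j 1 with hj | hj
  · subst hj
    rw [if_pos rfl, comL_one, comR_ne (by omega)]
    exact Ioo_subset_Ico_self
  · rw [if_neg hj, comL_ne hj]
    rcases eq_or_ne j (l + 1) with hj' | hj'
    · subst hj'
      rw [if_pos rfl, comR_last]
      simpa using Ioo_subset_Ioc_self
    · rw [if_neg hj', comR_ne hj']

lemma modal_subset_Icc {j : ℕ} (h1 : 1 ≤ j) (h2 : j ≤ l + 1) :
    modalInterval a b l c j ⊆ Icc (comL a c j) (comR b l c j) := by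
  have hl := S.hl
  unfold modalInterval
  rcases eq_or_ne j 1 with hj | hj
  · subst hj
    rw [if_pos rfl, comL_one, comR_ne (by omega)]
    exact Ico_subset_Icc_self
  · rw [if_neg hj, comL_ne hj]
    rcases eq_or_ne j (l + 1) with hj' | hj'
    · subst hj'
      rw [if_pos rfl, comR_last]
      simpa using Ioc_subset_Icc_self
    · rw [if_neg hj', comR_ne hj']
      exact Ioo_subset_Icc_self

lemma Icc_com_subset {j : ℕ} (h1 : 1 ≤ j) (h2 : j ≤ l + 1) :
    Icc (comL a c j) (comR b l c j) ⊆ Icc a b :=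
  Icc_subset_Icc (S.a_le_comL h1 h2) (S.comR_le_b h1 h2)

/-- strict monotonicity on the closed components -/
lemma monoc {j : ℕ} (h1 : 1 ≤ j) (h2 : j ≤ l + 1) (hodd : Odd j) :
    StrictMonoOn f (Icc (comL a c j) (comR b l c j)) := by
  refine strictMonoOn_Icc_of_Ioo (S.comL_lt_comR h1 h2)
    (S.hcont.mono (S.Icc_com_subset h1 h2)) ?_
  intro x hx y hy hxy
  exact S.hmono j h1 h2 hodd (S.Ioo_subset_modal h1 h2 hx) (S.Ioo_subset_modal h1 h2 hy) hxy

lemma antic {j : ℕ} (h1 : 1 ≤ j) (h2 : j ≤ l + 1) (heven : Even j) :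
    StrictAntiOn f (Icc (comL a c j) (comR b l c j)) := by
  refine strictAntiOn_Icc_of_Ioo (S.comL_lt_comR h1 h2)
    (S.hcont.mono (S.Icc_com_subset h1 h2)) ?_
  intro x hx y hy hxy
  exact S.hanti j h1 h2 heven (S.Ioo_subset_modal h1 h2 hx) (S.Ioo_subset_modal h1 h2 hy) hxy

lemma monoOrAnti_com {j : ℕ} (h1 : 1 ≤ j) (h2 : j ≤ l + 1) :
    StrictMonoOn f (Icc (comL a c j) (comR b l c j)) ∨
      StrictAntiOn f (Icc (comL a c j) (comR b l c j)) := by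
  rcases Nat.even_or_odd j with h | h
  · exact Or.inr (S.antic h1 h2 h)
  · exact Or.inl (S.monoc h1 h2 h)

/-- locate a level-free interval inside one closed component -/
lemma locate {m₁ m₂ : ℝ} (ham : a ≤ m₁) (hm : m₁ ≤ m₂) (hmb : m₂ ≤ b)
    (hfree : ∀ i, 1 ≤ i → i ≤ l → c i ∉ Ioo m₁ m₂) :
    ∃ j, 1 ≤ j ∧ j ≤ l + 1 ∧ comL a c j ≤ m₁ ∧ m₂ ≤ comR b l c j := by
  classical
  by_cases H : ∃ i ∈ Finset.Icc 1 l, c i ≤ m₁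
  · set Jf := (Finset.Icc 1 l).filter (fun i => c i ≤ m₁) with hJf
    have hne : Jf.Nonempty := by
      obtain ⟨i, hi, hci⟩ := H
      exact ⟨i, Finset.mem_filter.mpr ⟨hi, hci⟩⟩
    set i₀ := Jf.max' hne with hi₀
    have hi₀mem := Jf.max'_mem hne
    have hi₀Icc := (Finset.mem_filter.mp hi₀mem).1
    have hi₀1 : 1 ≤ i₀ := (Finset.mem_Icc.mp hi₀Icc).1
    have hi₀l : i₀ ≤ l := (Finset.mem_Icc.mp hi₀Icc).2
    have hci₀ : c i₀ ≤ m₁ := (Finset.mem_filter.mp hi₀mem).2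
    refine ⟨i₀ + 1, by omega, by omega, ?_, ?_⟩
    · rw [comL_ne (by omega)]
      simpa using hci₀
    · rcases eq_or_ne (i₀ + 1) (l + 1) with hj | hj
      · rw [hj, comR_last]; exact hmb
      · rw [comR_ne hj]
        have hlt : m₁ < c (i₀ + 1) := by
          by_contra hle
          push_neg at hle
          have : i₀ + 1 ∈ Jf := Finset.mem_filter.mpr
            ⟨Finset.mem_Icc.mpr ⟨by omega, by omega⟩, hle⟩
          have := Finset.le_max' _ _ this
          omega
        by_contra hgt
        push_neg at hgt
        exact hfree (i₀ + 1) (by omega) (by omega) ⟨hlt, hgt⟩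
  · have hl := S.hl
    refine ⟨1, le_rfl, by omega, ?_, ?_⟩
    · rw [comL_one]; exact ham
    · rw [comR_ne (by omega)]
      push_neg at H
      have hlt : m₁ < c 1 := H 1 (Finset.mem_Icc.mpr ⟨le_rfl, hl⟩)
      by_contra hgt
      push_neg at hgt
      exact hfree 1 le_rfl hl ⟨hlt, hgt⟩

/-- continuity of iterates -/
lemma contIter (n : ℕ) : ContinuousOn (f^[n]) (Icc a b) := by
  induction n with
  | zero => simpa using continuousOn_id
  | succ n ih =>
    rw [Function.iterate_succ']
    exact S.hcont.comp ih (S.hmaps.iterate n)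

lemma mapsIter (n : ℕ) : MapsTo (f^[n]) (Icc a b) (Icc a b) := S.hmaps.iterate n

end Setup
end LapNumAux

namespace LapNumAux
open Set

/-- strict (two-sided, punctured) local extremum relative to `[a,b]` -/
def IsExtr (g : ℝ → ℝ) (a b p : ℝ) : Prop :=
  ∃ δ > 0, (∀ y ∈ Set.Icc a b, |y - p| < δ → y ≠ p → g y < g p) ∨
           (∀ y ∈ Set.Icc a b, |y - p| < δ → y ≠ p → g p < g y)

lemma not_extr_of_crosses {g : ℝ → ℝ} {a b γ x : ℝ} (hx : x ∈ Ioo a b)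
    (hc : CrossesAt g γ x) (he : IsExtr g a b x) : False := by
  obtain ⟨hgx, ε, hε, hbr⟩ := hc
  obtain ⟨δ, hδ, hbe⟩ := he
  -- a point on the right, and a point on the left
  set yR := x + min (min ε δ) (b - x) / 2 with hyR
  have hbx : 0 < b - x := by linarith [hx.2]
  have hminR : 0 < min (min ε δ) (b - x) := lt_min (lt_min hε hδ) hbx
  have hyR1 : x < yR := by simp only [hyR]; linarith
  have hyRlt : yR < x + ε := by
    have : min (min ε δ) (b - x) ≤ ε := le_trans (min_le_left _ _) (min_le_left _ _)
    simp only [hyR]; linarith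
  have hyRb : yR ≤ b := by
    have : min (min ε δ) (b - x) ≤ b - x := min_le_right _ _
    simp only [hyR]; linarith
  have hyRa : a ≤ yR := le_trans hx.1.le hyR1.le
  have hyRδ : |yR - x| < δ := by
    have h1 : min (min ε δ) (b - x) ≤ δ := le_trans (min_le_left _ _) (min_le_right _ _)
    rw [abs_of_pos (by linarith)]
    simp only [hyR]; linarith
  set yL := x - min (min ε δ) (x - a) / 2 with hyL
  have hax : 0 < x - a := by linarith [hx.1]
  have hminL : 0 < min (min ε δ) (x - a) := lt_min (lt_min hε hδ) hax
  have hyL1 : yL < x := by simp only [hyL]; linarith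
  have hyLgt : x - ε < yL := by
    have : min (min ε δ) (x - a) ≤ ε := le_trans (min_le_left _ _) (min_le_left _ _)
    simp only [hyL]; linarith
  have hyLa : a ≤ yL := by
    have : min (min ε δ) (x - a) ≤ x - a := min_le_right _ _
    simp only [hyL]; linarith
  have hyLb : yL ≤ b := le_trans hyL1.le hx.2.le
  have hyLδ : |yL - x| < δ := by
    have h1 : min (min ε δ) (x - a) ≤ δ := le_trans (min_le_left _ _) (min_le_right _ _)
    rw [abs_of_neg (by linarith), neg_sub]
    simp only [hyL]; linarith
  rcases hbr with ⟨hL, hR⟩ | ⟨hL, hR⟩ <;> rcases hbe with hmax | hmin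
  · exact absurd (hmax yR ⟨hyRa, hyRb⟩ hyRδ hyR1.ne') (not_lt.mpr (hgx ▸ (hR yR ⟨hyR1, hyRlt⟩).le))
  · exact absurd (hmin yL ⟨hyLa, hyLb⟩ hyLδ hyL1.ne) (not_lt.mpr (hgx ▸ (hL yL ⟨hyLgt, hyL1⟩).le))
  · exact absurd (hmax yL ⟨hyLa, hyLb⟩ hyLδ hyL1.ne) (not_lt.mpr (hgx ▸ (hL yL ⟨hyLgt, hyL1⟩).le))
  · exact absurd (hmin yR ⟨hyRa, hyRb⟩ hyRδ hyR1.ne') (not_lt.mpr (hgx ▸ (hR yR ⟨hyR1, hyRlt⟩).le))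

/-- every member of the lap set is at least `F.card + 1` when every point of
`F` is an interior strict local extremum of `g` -/
lemma lap_lower {g : ℝ → ℝ} {a b : ℝ} (hab : a < b) (F : Finset ℝ)
    (hF : ∀ x ∈ F, x ∈ Ioo a b) (hext : ∀ x ∈ F, IsExtr g a b x) {k : ℕ}
    (hk : ∃ t : ℕ → ℝ, t 0 = a ∧ t k = b ∧ (∀ i < k, t i < t (i + 1)) ∧
      ∀ i < k, MonotoneOn g (Set.Icc (t i) (t (i + 1))) ∨
        AntitoneOn g (Set.Icc (t i) (t (i + 1)))) :
    F.card + 1 ≤ k := by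
  classical
  obtain ⟨t, ht0, htk, hinc, hmon⟩ := hk
  have hk0 : 0 < k := by
    rcases Nat.eq_zero_or_pos k with h | h
    · subst h; rw [ht0] at htk; exact absurd htk (ne_of_lt hab); 
    · exact h
  have htab : ∀ i ≤ k, a ≤ t i ∧ t i ≤ b := by
    intro i hi
    constructor
    · rcases Nat.eq_zero_or_pos i with h | h
      · subst h; exact le_of_eq ht0.symm
      · exact ht0 ▸ (chain_mono hinc 0 i h hi).le
    · rcases eq_or_lt_of_le hi with h | h
      · exact le_of_eq (h ▸ htk ▸ rfl)
      · exact htk ▸ (chain_mono hinc i k h le_rfl).le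
  -- each x in F is some t i with 1 ≤ i ≤ k - 1
  have key : ∀ x ∈ F, ∃ i, 1 ≤ i ∧ i ≤ k - 1 ∧ t i = x := by
    intro x hxF
    obtain ⟨hax, hxb⟩ := hF x hxF
    set J := (Finset.range k).filter (fun i => t i ≤ x) with hJ
    have hne : J.Nonempty := ⟨0, Finset.mem_filter.mpr ⟨Finset.mem_range.mpr hk0, ht0 ▸ hax.le⟩⟩
    set i := J.max' hne with hi
    have himem := J.max'_mem hne
    have hik : i < k := Finset.mem_range.mp (Finset.mem_filter.mp himem).1
    have hti : t i ≤ x := (Finset.mem_filter.mp himem).2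
    have hxlt : x < t (i + 1) := by
      rcases eq_or_lt_of_le (Nat.succ_le_of_lt hik) with h | h
      · have h' : i + 1 = k := h
        rw [h', htk]; exact hxb
      · by_contra hle
        push_neg at hle
        have : i + 1 ∈ J := Finset.mem_filter.mpr ⟨Finset.mem_range.mpr h, hle⟩
        have := Finset.le_max' _ _ this
        omega
    -- x cannot be in the open interior of the piece
    have hx_eq : t i = x := by
      rcases eq_or_lt_of_le hti with h | h
      · exact h
      · exfalso
        obtain ⟨δ, hδ, hbe⟩ := hext x hxF
        set δ' := min δ (min (x - t i) (t (i + 1) - x)) with hδ'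
        have hδ'0 : 0 < δ' := lt_min hδ (lt_min (by linarith) (by linarith))
        set u := x - δ' / 2 with hu
        set v := x + δ' / 2 with hv
        have hui : t i < u := by
          have : δ' ≤ x - t i := le_trans (min_le_right _ _) (min_le_left _ _)
          simp only [hu]; linarith
        have hvi : v < t (i + 1) := by
          have : δ' ≤ t (i + 1) - x := le_trans (min_le_right _ _) (min_le_right _ _)
          simp only [hv]; linarith
        have huIcc : u ∈ Icc (t i) (t (i + 1)) := ⟨hui.le, by simp only [hu]; linarith⟩
        have hvIcc : v ∈ Icc (t i) (t (i + 1)) := ⟨by simp only [hv]; linarith, hvi.le⟩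
        have hxIcc : x ∈ Icc (t i) (t (i + 1)) := ⟨hti, hxlt.le⟩
        have huab : u ∈ Icc a b := ⟨le_trans (htab i hik.le).1 huIcc.1,
          le_trans huIcc.2 (htab (i+1) hik).2⟩
        have hvab : v ∈ Icc a b := ⟨le_trans (htab i hik.le).1 hvIcc.1,
          le_trans hvIcc.2 (htab (i+1) hik).2⟩
        have huδ : |u - x| < δ := by
          rw [abs_of_neg (by simp only [hu]; linarith), neg_sub]
          have : δ' ≤ δ := min_le_left _ _
          simp only [hu]; linarith
        have hvδ : |v - x| < δ := by
          rw [abs_of_pos (by simp only [hv]; linarith)]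
          have : δ' ≤ δ := min_le_left _ _
          simp only [hv]; linarith
        have hune : u ≠ x := by simp only [hu]; intro hh; nlinarith [hδ'0]
        have hvne : v ≠ x := by simp only [hv]; intro hh; nlinarith [hδ'0]
        have hulx : u < x := by simp only [hu]; linarith
        have hxlv : x < v := by simp only [hv]; linarith
        rcases hbe with hmax | hmin <;> rcases hmon i hik with hm | hm
        · exact absurd (hm hxIcc hvIcc hxlv.le) (not_le.mpr (hmax v hvab hvδ hvne))
        · exact absurd (hm huIcc hxIcc hulx.le) (not_le.mpr (hmax u huab huδ hune))
        · exact absurd (hm huIcc hxIcc hulx.le) (not_le.mpr (hmin u huab huδ hune))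
        · exact absurd (hm hxIcc hvIcc hxlv.le) (not_le.mpr (hmin v hvab hvδ hvne))
    have hi1 : 1 ≤ i := by
      by_contra h0
      push_neg at h0
      interval_cases i
      rw [ht0] at hx_eq
      exact absurd hx_eq (ne_of_lt hax)
    exact ⟨i, hi1, by omega, hx_eq⟩
  -- injection into Finset.Icc 1 (k-1)
  choose ι hι1 hι2 hι3 using key
  have hcard : F.attach.card ≤ (Finset.Icc 1 (k-1)).card := Finset.card_le_card_of_injOn
    (fun p => ι p.1 p.2)
    (fun p _ => Finset.mem_Icc.mpr ⟨hι1 p.1 p.2, hι2 p.1 p.2⟩)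
    (fun p _ q _ he => Subtype.ext (by
      simp only at he
      rw [← hι3 p.1 p.2, ← hι3 q.1 q.2, he]))
  rw [Finset.card_attach] at hcard
  have : (Finset.Icc 1 (k-1)).card = k - 1 := by
    rw [Nat.card_Icc]; omega
  omega

end LapNumAux

namespace LapNumAux
open Set

lemma exists_partition {a b : ℝ} (hab : a < b) (F : Finset ℝ)
    (hF : ∀ x ∈ F, x ∈ Ioo a b) :
    ∃ t : ℕ → ℝ, t 0 = a ∧ t (F.card + 1) = b ∧ (∀ i < F.card + 1, t i < t (i + 1)) ∧
      (∀ i < F.card + 1, ∀ z ∈ F, z ∉ Ioo (t i) (t (i + 1))) ∧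
      (∀ i ≤ F.card + 1, a ≤ t i ∧ t i ≤ b) := by
  classical
  set m := F.card with hm
  set L := F.sort (· ≤ ·) with hL
  have hlen : L.length = m := Finset.length_sort _
  have hsor : List.Pairwise (· < ·) L := (Finset.sortedLT_sort F).pairwise
  have hpair := List.pairwise_iff_getElem.mp hsor
  set t : ℕ → ℝ := fun i => if i = 0 then a else L.getD (i - 1) b with ht
  have ht0 : t 0 = a := by simp only [ht, if_pos rfl]
  have htout : ∀ i, m + 1 ≤ i → t i = b := by
    intro i hi
    simp only [ht]
    rw [if_neg (by omega), List.getD_eq_default]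
    omega
  have htF : ∀ i, 1 ≤ i → i ≤ m → t i ∈ F := by
    intro i h1 h2
    simp only [ht]
    rw [if_neg (by omega)]
    have hlt : i - 1 < L.length := by omega
    rw [List.getD_eq_getElem L b hlt]
    exact (Finset.mem_sort _).mp (List.getElem_mem _)
  have hgetlt : ∀ i j, 1 ≤ i → i < j → j ≤ m → t i < t j := by
    intro i j h1 hij hjm
    simp only [ht]
    rw [if_neg (by omega), if_neg (by omega)]
    have hi' : i - 1 < L.length := by omega
    have hj' : j - 1 < L.length := by omega
    rw [List.getD_eq_getElem L b hi', List.getD_eq_getElem L b hj']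
    exact hpair (i - 1) (j - 1) hi' hj' (by omega)
  have hstep : ∀ i < m + 1, t i < t (i + 1) := by
    intro i hi
    rcases Nat.eq_zero_or_pos i with h0 | h0
    · subst h0
      rcases Nat.eq_zero_or_pos m with hm0 | hm0
      · rw [ht0, htout 1 (by omega)]; exact hab
      · rw [ht0]
        exact (hF _ (htF 1 le_rfl hm0)).1
    · rcases eq_or_lt_of_le (Nat.succ_le_of_lt hi) with he | hlt
      · have he' : i = m := by omega
        rw [htout (i + 1) (by omega)]
        exact (hF _ (htF i h0 he'.le)).2
      · exact hgetlt i (i + 1) h0 (by omega) (by omega)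
  have tmono : ∀ i j, i ≤ j → j ≤ m + 1 → t i ≤ t j := by
    intro i j hij hjm
    rcases eq_or_lt_of_le hij with h | h
    · exact le_of_eq (by rw [h])
    · exact (chain_mono hstep i j h hjm).le
  refine ⟨t, ht0, htout (m + 1) le_rfl, hstep, ?_, ?_⟩
  · intro i hi z hz hmem
    obtain ⟨k, hk, hzk⟩ : ∃ k, k < m ∧ t (k + 1) = z := by
      obtain ⟨k, hk, he⟩ := List.mem_iff_getElem.mp ((Finset.mem_sort (α := ℝ) (· ≤ ·)).mpr hz)
      have hk' : k < m := by rwa [← hL, hlen] at hk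
      refine ⟨k, hk', ?_⟩
      simp only [ht]
      rw [if_neg (by omega), List.getD_eq_getElem L b (by omega)]
      simpa using he
    have h1 : i < k + 1 := by
      by_contra hle
      push_neg at hle
      exact absurd (tmono (k + 1) i hle (by omega)) (not_le.mpr (hzk ▸ hmem.1))
    have h2 : k + 1 < i + 1 := by
      by_contra hle
      push_neg at hle
      exact absurd (tmono (i + 1) (k + 1) hle (by omega)) (not_le.mpr (hzk ▸ hmem.2))
    omega
  · intro i hi
    exact ⟨ht0 ▸ tmono 0 i (Nat.zero_le _) hi, htout (m + 1) le_rfl ▸ tmono i (m + 1) hi le_rfl⟩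

/-- the lap number of `g` equals `F.card + 1` -/
lemma lap_eq {g : ℝ → ℝ} {a b : ℝ} (hab : a < b) (F : Finset ℝ)
    (hF : ∀ x ∈ F, x ∈ Ioo a b) (hext : ∀ x ∈ F, IsExtr g a b x)
    (hmon : ∀ p q, a ≤ p → p < q → q ≤ b → (∀ z ∈ F, z ∉ Ioo p q) →
      StrictMonoOn g (Icc p q) ∨ StrictAntiOn g (Icc p q))
    {M : ℕ} (hM : IsLapNumber g a b M) : M = F.card + 1 := by
  obtain ⟨t, ht0, htm, hstep, hgap, hbd⟩ := exists_partition hab F hF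
  have hmem : (F.card + 1) ∈ {k : ℕ | ∃ t : ℕ → ℝ, t 0 = a ∧ t k = b ∧
      (∀ i < k, t i < t (i + 1)) ∧
      ∀ i < k, MonotoneOn g (Set.Icc (t i) (t (i + 1))) ∨
        AntitoneOn g (Set.Icc (t i) (t (i + 1)))} := by
    refine ⟨t, ht0, htm, hstep, ?_⟩
    intro i hi
    rcases hmon (t i) (t (i + 1)) (hbd i (by omega)).1 (hstep i hi) (hbd (i + 1) hi).2
      (fun z hz => hgap i hi z hz) with h | h
    · exact Or.inl h.monotoneOn
    · exact Or.inr h.antitoneOn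
  have hle : ∀ k ∈ {k : ℕ | ∃ t : ℕ → ℝ, t 0 = a ∧ t k = b ∧
      (∀ i < k, t i < t (i + 1)) ∧
      ∀ i < k, MonotoneOn g (Set.Icc (t i) (t (i + 1))) ∨
        AntitoneOn g (Set.Icc (t i) (t (i + 1)))}, F.card + 1 ≤ k :=
    fun k hk => lap_lower hab F hF hext hk
  exact hM.unique ⟨hmem, hle⟩

end LapNumAux

namespace LapNumAux
open Set

namespace Setup

variable {a b : ℝ} {l : ℕ} {c : ℕ → ℝ} {f : ℝ → ℝ} (S : Setup a b l c f)
include S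

/-- local behaviour of `f` near any value `v ∈ [a,b]`:
near `v` (within `[a,b]`), `f` is strictly monotone, strictly antitone,
or has a strict maximum or minimum at `v`. -/
lemma locBehaviour (v : ℝ) (hv : v ∈ Icc a b) : ∃ δ > 0,
    (∀ w₁ ∈ Icc a b, ∀ w₂ ∈ Icc a b, |w₁ - v| < δ → |w₂ - v| < δ → w₁ < w₂ → f w₁ < f w₂) ∨
    (∀ w₁ ∈ Icc a b, ∀ w₂ ∈ Icc a b, |w₁ - v| < δ → |w₂ - v| < δ → w₁ < w₂ → f w₂ < f w₁) ∨
    (∀ w ∈ Icc a b, |w - v| < δ → w ≠ v → f w < f v) ∨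
    (∀ w ∈ Icc a b, |w - v| < δ → w ≠ v → f v < f w) := by
  by_cases hlev : ∃ i, 1 ≤ i ∧ i ≤ l ∧ v = c i
  · obtain ⟨i, hi1, hil, hvc⟩ := hlev
    have hiR : comR b l c i = c i := comR_ne (by omega) b c
    have hiL : comL a c (i + 1) = c i := by rw [comL_ne (by omega)]; simp
    have h1 : comL a c i < c i := hiR ▸ S.comL_lt_comR hi1 (by omega)
    have h2 : c i < comR b l c (i + 1) := hiL ▸ S.comL_lt_comR (by omega) (by omega)
    set δ := min (c i - comL a c i) (comR b l c (i + 1) - c i) with hδ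
    have hδ0 : 0 < δ := lt_min (by linarith) (by linarith)
    have hleft : ∀ w ∈ Icc a b, |w - v| < δ → w ≤ v →
        w ∈ Icc (comL a c i) (comR b l c i) := by
      intro w hw hwδ hwv
      have hd : δ ≤ c i - comL a c i := min_le_left _ _
      have := abs_lt.mp hwδ
      rw [hiR]
      exact ⟨by rw [hvc] at this; linarith [this.1], hvc ▸ hwv⟩
    have hright : ∀ w ∈ Icc a b, |w - v| < δ → v ≤ w →
        w ∈ Icc (comL a c (i + 1)) (comR b l c (i + 1)) := by
      intro w hw hwδ hwv
      have hd : δ ≤ comR b l c (i + 1) - c i := min_le_right _ _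
      have := abs_lt.mp hwδ
      rw [hiL]
      exact ⟨hvc ▸ hwv, by rw [hvc] at this; linarith [this.2]⟩
    have hvL : v ∈ Icc (comL a c i) (comR b l c i) := by
      rw [hvc, hiR]; exact ⟨h1.le, le_rfl⟩
    have hvR : v ∈ Icc (comL a c (i + 1)) (comR b l c (i + 1)) := by
      rw [hvc, hiL]; exact ⟨le_rfl, h2.le⟩
    rcases Nat.even_or_odd i with hpar | hpar
    · -- Even i : f strictly decreasing before c i, increasing after : strict min
      have hfa := S.antic hi1 (by omega) hpar
      have hfm := S.monoc (j := i + 1) (by omega) (by omega) (Even.add_one hpar)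
      refine ⟨δ, hδ0, Or.inr (Or.inr (Or.inr ?_))⟩
      intro w hw hwδ hwne
      rcases lt_or_gt_of_ne hwne with h | h
      · exact hfa (hleft w hw hwδ h.le) hvL h
      · exact hfm hvR (hright w hw hwδ h.le) h
    · -- Odd i : strict max
      have hfm := S.monoc hi1 (by omega) hpar
      have hfa := S.antic (j := i + 1) (by omega) (by omega) (Odd.add_one hpar)
      refine ⟨δ, hδ0, Or.inr (Or.inr (Or.inl ?_))⟩
      intro w hw hwδ hwne
      rcases lt_or_gt_of_ne hwne with h | h
      · exact hfm (hleft w hw hwδ h.le) hvL h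
      · exact hfa hvR (hright w hw hwδ h.le) h
  · push_neg at hlev
    obtain ⟨j, hj1, hjl, hjL, hjR⟩ := S.locate hv.1 le_rfl hv.2
      (fun i h1 h2 => by simp)
    set δL := if j = 1 then (1 : ℝ) else v - c (j - 1) with hδL
    set δR := if j = l + 1 then (1 : ℝ) else c j - v with hδR
    have hδL0 : 0 < δL := by
      simp only [hδL]
      split
      · norm_num
      · next hne =>
        have := hjL
        rw [comL_ne hne] at this
        have hne' := hlev (j - 1) (by omega) (by omega)
        cases eq_or_lt_of_le this with
        | inl h => exact absurd h.symm hne'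
        | inr h => linarith
    have hδR0 : 0 < δR := by
      simp only [hδR]
      split
      · norm_num
      · next hne =>
        have := hjR
        rw [comR_ne hne] at this
        have hne' := hlev j hj1 (by omega)
        cases eq_or_lt_of_le this with
        | inl h => exact absurd h hne'
        | inr h => linarith
    set δ := min δL δR with hδ
    have hδ0 : 0 < δ := lt_min hδL0 hδR0
    have hmem : ∀ w ∈ Icc a b, |w - v| < δ → w ∈ Icc (comL a c j) (comR b l c j) := by
      intro w hw hwδ
      have habs := abs_lt.mp hwδ
      constructor
      · rcases eq_or_ne j 1 with h | h
        · rw [h, comL_one]; exact hw.1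
        · rw [comL_ne h]
          have h1 : δ ≤ δL := min_le_left _ _
          have h2 : δL = v - c (j - 1) := if_neg h
          linarith [habs.1]
      · rcases eq_or_ne j (l + 1) with h | h
        · rw [h, comR_last]; exact hw.2
        · rw [comR_ne h]
          have h1 : δ ≤ δR := min_le_right _ _
          have h2 : δR = c j - v := if_neg h
          linarith [habs.2]
    rcases S.monoOrAnti_com hj1 hjl with hmono | hanti
    · exact ⟨δ, hδ0, Or.inl fun w₁ h1 w₂ h2 hd1 hd2 hlt =>
        hmono (hmem w₁ h1 hd1) (hmem w₂ h2 hd2) hlt⟩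
    · exact ⟨δ, hδ0, Or.inr (Or.inl fun w₁ h1 w₂ h2 hd1 hd2 hlt =>
        hanti (hmem w₁ h1 hd1) (hmem w₂ h2 hd2) hlt)⟩

/-- persistence of strict local extrema under one more iterate -/
lemma extr_step {n : ℕ} {p : ℝ} (hp : p ∈ Ioo a b) (he : IsExtr (f^[n]) a b p) :
    IsExtr (f^[n + 1]) a b p := by
  have hpab : p ∈ Icc a b := ⟨hp.1.le, hp.2.le⟩
  have hgp : f^[n] p ∈ Icc a b := S.mapsIter n hpab
  obtain ⟨δ₁, hδ₁, hbeh⟩ := S.locBehaviour (f^[n] p) hgp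
  have hcw : ContinuousWithinAt (f^[n]) (Icc a b) p := (S.contIter n) p hpab
  obtain ⟨δ₂, hδ₂, hδ₂p⟩ := Metric.continuousWithinAt_iff.mp hcw δ₁ hδ₁
  obtain ⟨δ₃, hδ₃, hext⟩ := he
  refine ⟨min δ₂ δ₃, lt_min hδ₂ hδ₃, ?_⟩
  have hyv : ∀ y ∈ Icc a b, |y - p| < min δ₂ δ₃ → |f^[n] y - f^[n] p| < δ₁ := by
    intro y hy hlt
    have := hδ₂p hy (by rw [Real.dist_eq]; exact lt_of_lt_of_le hlt (min_le_left _ _))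
    rwa [Real.dist_eq] at this
  have hgy : ∀ y ∈ Icc a b, f^[n] y ∈ Icc a b := fun y hy => S.mapsIter n hy
  have hpδ : |f^[n] p - f^[n] p| < δ₁ := by simpa using hδ₁
  simp only [Function.iterate_succ_apply']
  rcases hext with hmax | hmin <;> rcases hbeh with hM | hA | hmx | hmn
  · refine Or.inl fun y hy hyδ hyne => ?_
    exact hM _ (hgy y hy) _ hgp (hyv y hy hyδ) hpδ
      (hmax y hy (lt_of_lt_of_le hyδ (min_le_right _ _)) hyne)
  · refine Or.inr fun y hy hyδ hyne => ?_
    exact hA _ (hgy y hy) _ hgp (hyv y hy hyδ) hpδ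
      (hmax y hy (lt_of_lt_of_le hyδ (min_le_right _ _)) hyne)
  · refine Or.inl fun y hy hyδ hyne => ?_
    exact hmx _ (hgy y hy) (hyv y hy hyδ)
      (ne_of_lt (hmax y hy (lt_of_lt_of_le hyδ (min_le_right _ _)) hyne))
  · refine Or.inr fun y hy hyδ hyne => ?_
    exact hmn _ (hgy y hy) (hyv y hy hyδ)
      (ne_of_lt (hmax y hy (lt_of_lt_of_le hyδ (min_le_right _ _)) hyne))
  · refine Or.inr fun y hy hyδ hyne => ?_
    exact hM _ hgp _ (hgy y hy) hpδ (hyv y hy hyδ)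
      (hmin y hy (lt_of_lt_of_le hyδ (min_le_right _ _)) hyne)
  · refine Or.inl fun y hy hyδ hyne => ?_
    exact hA _ hgp _ (hgy y hy) hpδ (hyv y hy hyδ)
      (hmin y hy (lt_of_lt_of_le hyδ (min_le_right _ _)) hyne)
  · refine Or.inl fun y hy hyδ hyne => ?_
    exact hmx _ (hgy y hy) (hyv y hy hyδ)
      (ne_of_gt (hmin y hy (lt_of_lt_of_le hyδ (min_le_right _ _)) hyne))
  · refine Or.inr fun y hy hyδ hyne => ?_
    exact hmn _ (hgy y hy) (hyv y hy hyδ)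
      (ne_of_gt (hmin y hy (lt_of_lt_of_le hyδ (min_le_right _ _)) hyne))

end Setup
end LapNumAux

namespace LapNumAux
open Set

lemma comp_mono_mono {g h : ℝ → ℝ} {I D : Set ℝ} (hm : MapsTo g I D)
    (hg : StrictMonoOn g I) (hh : StrictMonoOn h D) : StrictMonoOn (h ∘ g) I :=
  fun x hx y hy hxy => hh (hm hx) (hm hy) (hg hx hy hxy)

lemma comp_mono_anti {g h : ℝ → ℝ} {I D : Set ℝ} (hm : MapsTo g I D)
    (hg : StrictMonoOn g I) (hh : StrictAntiOn h D) : StrictAntiOn (h ∘ g) I :=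
  fun x hx y hy hxy => hh (hm hx) (hm hy) (hg hx hy hxy)

lemma comp_anti_mono {g h : ℝ → ℝ} {I D : Set ℝ} (hm : MapsTo g I D)
    (hg : StrictAntiOn g I) (hh : StrictMonoOn h D) : StrictAntiOn (h ∘ g) I :=
  fun x hx y hy hxy => hh (hm hy) (hm hx) (hg hx hy hxy)

lemma comp_anti_anti {g h : ℝ → ℝ} {I D : Set ℝ} (hm : MapsTo g I D)
    (hg : StrictAntiOn g I) (hh : StrictAntiOn h D) : StrictMonoOn (h ∘ g) I :=
  fun x hx y hy hxy => hh (hm hy) (hm hx) (hg hx hy hxy)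

lemma isExtr_of_mono_anti {g : ℝ → ℝ} {a b p x q : ℝ} (hpx : p < x) (hxq : x < q)
    (H : (StrictMonoOn g (Icc p x) ∧ StrictAntiOn g (Icc x q)) ∨
         (StrictAntiOn g (Icc p x) ∧ StrictMonoOn g (Icc x q))) : IsExtr g a b x := by
  refine ⟨min (x - p) (q - x), lt_min (by linarith) (by linarith), ?_⟩
  have hL : ∀ y : ℝ, |y - x| < min (x - p) (q - x) → y < x → y ∈ Icc p x ∧ x ∈ Icc p x := by
    intro y hyδ hyx
    have h1 : min (x - p) (q - x) ≤ x - p := min_le_left _ _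
    have := abs_lt.mp hyδ
    exact ⟨⟨by linarith [this.1], hyx.le⟩, ⟨hpx.le, le_rfl⟩⟩
  have hR : ∀ y : ℝ, |y - x| < min (x - p) (q - x) → x < y → y ∈ Icc x q ∧ x ∈ Icc x q := by
    intro y hyδ hyx
    have h1 : min (x - p) (q - x) ≤ q - x := min_le_right _ _
    have := abs_lt.mp hyδ
    exact ⟨⟨hyx.le, by linarith [this.2]⟩, ⟨le_rfl, hxq.le⟩⟩
  rcases H with ⟨h1, h2⟩ | ⟨h1, h2⟩
  · refine Or.inl fun y _ hyδ hyne => ?_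
    rcases lt_or_gt_of_ne hyne with h | h
    · obtain ⟨hy1, hy2⟩ := hL y hyδ h
      exact h1 hy1 hy2 h
    · obtain ⟨hy1, hy2⟩ := hR y hyδ h
      exact h2 hy2 hy1 h
  · refine Or.inr fun y _ hyδ hyne => ?_
    rcases lt_or_gt_of_ne hyne with h | h
    · obtain ⟨hy1, hy2⟩ := hL y hyδ h
      exact h1 hy1 hy2 h
    · obtain ⟨hy1, hy2⟩ := hR y hyδ h
      exact h2 hy2 hy1 h

/-- the inductive invariant: `F` is the (finite) set of turning points of `f^[n]` -/
structure Good (a b : ℝ) (l : ℕ) (c : ℕ → ℝ) (f : ℝ → ℝ) (n : ℕ) (F : Finset ℝ) : Prop where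
  hsub : ∀ x ∈ F, x ∈ Set.Ioo a b
  hext : ∀ x ∈ F, IsExtr (f^[n]) a b x
  hmon : ∀ p q, a ≤ p → p < q → q ≤ b → (∀ z ∈ F, z ∉ Set.Ioo p q) →
    StrictMonoOn (f^[n]) (Set.Icc p q) ∨ StrictAntiOn (f^[n]) (Set.Icc p q)
  hcov : ∀ x ∈ Set.Ioo a b, ∀ μ < n, ∀ i, 1 ≤ i → i ≤ l → f^[μ] x = c i → x ∈ F

lemma good_zero (a b : ℝ) (l : ℕ) (c : ℕ → ℝ) (f : ℝ → ℝ) :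
    Good a b l c f 0 ∅ := by
  refine ⟨?_, ?_, ?_, ?_⟩
  · intro x hx; exact absurd hx (Finset.notMem_empty x)
  · intro x hx; exact absurd hx (Finset.notMem_empty x)
  · intro p q _ _ _ _
    refine Or.inl fun x hx y hy hxy => ?_
    simpa using hxy
  · intro x _ μ hμ; omega

end LapNumAux

namespace LapNumAux
open Set

/-- candidate new turning points at time `n` for level `γ` -/
def Znew (a b : ℝ) (f : ℝ → ℝ) (F : Finset ℝ) (n : ℕ) (γ : ℝ) : Set ℝ :=
  {x | x ∈ Set.Ioo a b ∧ x ∉ F ∧ f^[n] x = γ}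

variable {a b : ℝ} {l : ℕ} {c : ℕ → ℝ} {f : ℝ → ℝ}

lemma Zfin {n : ℕ} {F : Finset ℝ} (hG : Good a b l c f n F) (γ : ℝ) :
    (Znew a b f F n γ).Finite := by
  classical
  set pf : ℝ → ℝ := fun x =>
    (insert a (F.filter (fun w => w < x))).max' (Finset.insert_nonempty _ _) with hpf
  have hkey : ∀ x ∈ Znew a b f F n γ,
      pf x < x ∧ (∀ z ∈ F, z < x → z ≤ pf x) ∧ pf x ∈ insert a F := by
    intro x hx
    refine ⟨?_, ?_, ?_⟩
    · rw [hpf, Finset.max'_lt_iff]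
      intro y hy
      rcases Finset.mem_insert.mp hy with h | h
      · exact h ▸ hx.1.1
      · exact (Finset.mem_filter.mp h).2
    · intro z hz hzx
      have hmem : z ∈ insert a (F.filter (fun w => w < x)) :=
        Finset.mem_insert_of_mem (Finset.mem_filter.mpr ⟨hz, hzx⟩)
      rw [hpf]
      exact Finset.le_max' _ _ hmem
    · have hm := Finset.max'_mem (insert a (F.filter (fun w => w < x)))
        (Finset.insert_nonempty _ _)
      rcases Finset.mem_insert.mp hm with h | h
      · exact Finset.mem_insert.mpr (Or.inl h)
      · exact Finset.mem_insert.mpr (Or.inr (Finset.filter_subset _ _ h))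
  have main : ∀ x ∈ Znew a b f F n γ, ∀ y ∈ Znew a b f F n γ, x < y → pf x = pf y → False := by
    intro x hx y hy hxy hpe
    have hgap : ∀ z ∈ F, z ∉ Ioo x y := by
      intro z hz hmem
      have h1 := (hkey y hy).2.1 z hz hmem.2
      have h2 := (hkey x hx).1
      rw [← hpe] at h1
      linarith [hmem.1]
    have hm := hG.hmon x y hx.1.1.le hxy hy.1.2.le hgap
    have hxI : x ∈ Icc x y := ⟨le_rfl, hxy.le⟩
    have hyI : y ∈ Icc x y := ⟨hxy.le, le_rfl⟩
    have hne : f^[n] x ≠ f^[n] y → False := by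
      rw [hx.2.2, hy.2.2]; exact fun h => h rfl
    rcases hm with h | h
    · exact hne (ne_of_lt (h hxI hyI hxy))
    · exact hne (ne_of_gt (h hxI hyI hxy))
  have hinj : InjOn pf (Znew a b f F n γ) := by
    intro x hx y hy he
    by_contra hne
    rcases lt_or_gt_of_ne hne with h | h
    · exact main x hx y hy h he
    · exact main y hy x hx h he.symm
  have himg : pf '' (Znew a b f F n γ) ⊆ ↑(insert a F) := by
    rintro w ⟨x, hx, rfl⟩
    exact Finset.mem_coe.mpr (hkey x hx).2.2
  exact Set.Finite.of_finite_image
    (Set.Finite.subset (insert a F).finite_toSet himg) hinj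

lemma ZS {n : ℕ} {F : Finset ℝ} (hG : Good a b l c f n F) {i : ℕ}
    (h1 : 1 ≤ i) (h2 : i ≤ l) :
    Znew a b f F n (c i) = SimpleZeroSet f a b (c i) n := by
  ext x
  simp only [Znew, SimpleZeroSet, mem_setOf_eq]
  constructor
  · rintro ⟨hxab, hxF, hfx⟩
    refine ⟨hxab, fun μ hμ hc' => hxF (hG.hcov x hxab μ hμ i h1 h2 hc'), ?_⟩
    obtain ⟨p, hpa, hpx, hpgap⟩ := exists_gap_lt F hxab.1
    obtain ⟨q, hqb, hxq, hqgap⟩ := exists_gap_gt F hxab.2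
    have hgap : ∀ z ∈ F, z ∉ Ioo p q := by
      intro z hz hmem
      rcases lt_trichotomy z x with h | h | h
      · exact hpgap z hz ⟨hmem.1, h⟩
      · exact hxF (h ▸ hz)
      · exact hqgap z hz ⟨h, hmem.2⟩
    have hm := hG.hmon p q hpa (hpx.trans hxq) hqb hgap
    refine ⟨hfx, min (x - p) (q - x), lt_min (by linarith) (by linarith), ?_⟩
    have hxm : x ∈ Icc p q := ⟨hpx.le, hxq.le⟩
    have hbl : ∀ y ∈ Ioo (x - min (x - p) (q - x)) x, y ∈ Icc p q ∧ y < x := by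
      intro y hy
      have h1' : min (x - p) (q - x) ≤ x - p := min_le_left _ _
      exact ⟨⟨by linarith [hy.1], by linarith [hy.2, hxq]⟩, hy.2⟩
    have hbr : ∀ y ∈ Ioo x (x + min (x - p) (q - x)), y ∈ Icc p q ∧ x < y := by
      intro y hy
      have h1' : min (x - p) (q - x) ≤ q - x := min_le_right _ _
      exact ⟨⟨by linarith [hy.1, hpx], by linarith [hy.2]⟩, hy.1⟩
    rcases hm with hm | hm
    · refine Or.inl ⟨fun y hy => ?_, fun y hy => ?_⟩
      · obtain ⟨hyI, hyx⟩ := hbl y hy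
        exact hfx ▸ hm hyI hxm hyx
      · obtain ⟨hyI, hyx⟩ := hbr y hy
        exact hfx ▸ hm hxm hyI hyx
    · refine Or.inr ⟨fun y hy => ?_, fun y hy => ?_⟩
      · obtain ⟨hyI, hyx⟩ := hbl y hy
        exact hfx ▸ hm hyI hxm hyx
      · obtain ⟨hyI, hyx⟩ := hbr y hy
        exact hfx ▸ hm hxm hyI hyx
  · rintro ⟨hxab, _, hcr⟩
    refine ⟨hxab, fun hxF => not_extr_of_crosses hxab hcr (hG.hext x hxF), hcr.1⟩

end LapNumAux

namespace LapNumAux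
open Set

namespace Setup

variable {a b : ℝ} {l : ℕ} {c : ℕ → ℝ} {f : ℝ → ℝ} (S : Setup a b l c f)
include S

lemma good_step {n : ℕ} {F : Finset ℝ} (hG : Good a b l c f n F) :
    ∃ F' : Finset ℝ, Good a b l c f (n + 1) F' ∧
      F'.card = F.card + ∑ i ∈ Finset.Icc 1 l, Nat.card (SimpleZeroSet f a b (c i) n) := by
  classical
  set C : Finset ℝ := (Finset.Icc 1 l).biUnion (fun i => (Zfin hG (c i)).toFinset) with hC
  have hCmem : ∀ x, x ∈ C ↔ ∃ i, 1 ≤ i ∧ i ≤ l ∧ x ∈ Znew a b f F n (c i) := by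
    intro x
    simp only [hC, Finset.mem_biUnion, Finset.mem_Icc, Set.Finite.mem_toFinset]
    constructor
    · rintro ⟨i, ⟨hi1, hi2⟩, hx⟩; exact ⟨i, hi1, hi2, hx⟩
    · rintro ⟨i, hi1, hi2, hx⟩; exact ⟨i, ⟨hi1, hi2⟩, hx⟩
  have hCF : ∀ x ∈ C, x ∉ F := by
    intro x hx
    obtain ⟨i, _, _, hz⟩ := (hCmem x).mp hx
    exact hz.2.1
  have hCab : ∀ x ∈ C, x ∈ Ioo a b := by
    intro x hx
    obtain ⟨i, _, _, hz⟩ := (hCmem x).mp hx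
    exact hz.1
  have hmemF' : ∀ x, x ∈ Ioo a b → (∃ i, 1 ≤ i ∧ i ≤ l ∧ f^[n] x = c i) → x ∈ F ∪ C := by
    rintro x hxab ⟨i, h1, h2, hfx⟩
    by_cases hxF : x ∈ F
    · exact Finset.mem_union_left _ hxF
    · exact Finset.mem_union_right _ ((hCmem x).mpr ⟨i, h1, h2, hxab, hxF, hfx⟩)
  have hmon' : ∀ p q, a ≤ p → p < q → q ≤ b → (∀ z ∈ F ∪ C, z ∉ Ioo p q) →
      StrictMonoOn (f^[n + 1]) (Icc p q) ∨ StrictAntiOn (f^[n + 1]) (Icc p q) := by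
    intro p q hap hpq hqb hgap
    have hgF : ∀ z ∈ F, z ∉ Ioo p q := fun z hz => hgap z (Finset.mem_union_left _ hz)
    have hm0 := hG.hmon p q hap hpq hqb hgF
    have hpab : p ∈ Icc a b := ⟨hap, hpq.le.trans hqb⟩
    have hqab : q ∈ Icc a b := ⟨hap.trans hpq.le, hqb⟩
    have hcont' : ContinuousOn (f^[n]) (Icc p q) :=
      (S.contIter n).mono (Icc_subset_Icc hap hqb)
    have hval : ∀ x ∈ Ioo p q, ∀ i, 1 ≤ i → i ≤ l → f^[n] x ≠ c i := by
      intro x hx i h1 h2 hfx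
      have hxab : x ∈ Ioo a b := ⟨lt_of_le_of_lt hap hx.1, lt_of_lt_of_le hx.2 hqb⟩
      exact hgap x (hmemF' x hxab ⟨i, h1, h2, hfx⟩) hx
    rw [Function.iterate_succ']
    rcases hm0 with hm | hm
    · have huv : f^[n] p < f^[n] q := hm ⟨le_rfl, hpq.le⟩ ⟨hpq.le, le_rfl⟩ hpq
      have hfree : ∀ i, 1 ≤ i → i ≤ l → c i ∉ Ioo (f^[n] p) (f^[n] q) := by
        intro i h1 h2 hmem
        obtain ⟨x, hx, hfx⟩ := intermediate_value_Ioo hpq.le hcont' hmem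
        exact hval x hx i h1 h2 hfx
      obtain ⟨j, hj1, hjl, hjL, hjR⟩ :=
        S.locate (S.mapsIter n hpab).1 huv.le (S.mapsIter n hqab).2 hfree
      have hmaps : MapsTo (f^[n]) (Icc p q) (Icc (comL a c j) (comR b l c j)) := by
        intro x hx
        exact ⟨le_trans hjL (hm.monotoneOn ⟨le_rfl, hpq.le⟩ hx hx.1),
               le_trans (hm.monotoneOn hx ⟨hpq.le, le_rfl⟩ hx.2) hjR⟩
      exact monoOrAnti_comp hmaps (Or.inl hm) (S.monoOrAnti_com hj1 hjl)
    · have huv : f^[n] q < f^[n] p := hm ⟨le_rfl, hpq.le⟩ ⟨hpq.le, le_rfl⟩ hpq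
      have hfree : ∀ i, 1 ≤ i → i ≤ l → c i ∉ Ioo (f^[n] q) (f^[n] p) := by
        intro i h1 h2 hmem
        obtain ⟨x, hx, hfx⟩ := intermediate_value_Ioo' hpq.le hcont' hmem
        exact hval x hx i h1 h2 hfx
      obtain ⟨j, hj1, hjl, hjL, hjR⟩ :=
        S.locate (S.mapsIter n hqab).1 huv.le (S.mapsIter n hpab).2 hfree
      have hmaps : MapsTo (f^[n]) (Icc p q) (Icc (comL a c j) (comR b l c j)) := by
        intro x hx
        exact ⟨le_trans hjL (hm.antitoneOn hx ⟨hpq.le, le_rfl⟩ hx.2),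
               le_trans (hm.antitoneOn ⟨le_rfl, hpq.le⟩ hx hx.1) hjR⟩
      exact monoOrAnti_comp hmaps (Or.inr hm) (S.monoOrAnti_com hj1 hjl)
  have hextC : ∀ x ∈ C, IsExtr (f^[n + 1]) a b x := by
    intro x hxC
    obtain ⟨i, h1, h2, hxZ⟩ := (hCmem x).mp hxC
    obtain ⟨hxab, hxF, hfx⟩ := hxZ
    have hS : x ∈ SimpleZeroSet f a b (c i) n := by
      rw [← ZS hG h1 h2]; exact ⟨hxab, hxF, hfx⟩
    have hcr : CrossesAt (f^[n]) (c i) x := hS.2.2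
    obtain ⟨-, ε, hε, hbr⟩ := hcr
    obtain ⟨p, hpa, hpx, hpgap⟩ := exists_gap_lt (F ∪ C) hxab.1
    obtain ⟨q, hqb, hxq, hqgap⟩ := exists_gap_gt (F ∪ C) hxab.2
    have hgL : ∀ z ∈ F, z ∉ Ioo p x := fun z hz => hpgap z (Finset.mem_union_left _ hz)
    have hgR : ∀ z ∈ F, z ∉ Ioo x q := fun z hz => hqgap z (Finset.mem_union_left _ hz)
    have hmL := hG.hmon p x hpa hpx hxab.2.le hgL
    have hmR := hG.hmon x q hxab.1.le hxq hqb hgR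
    set M := max p (x - ε) with hM
    have hMx : M < x := max_lt hpx (by linarith)
    set yL := (M + x) / 2 with hyL
    have hyLp : p < yL := by
      have : p ≤ M := le_max_left _ _
      simp only [hyL]; linarith
    have hyLε : x - ε < yL := by
      have : x - ε ≤ M := le_max_right _ _
      simp only [hyL]; linarith
    have hyLx : yL < x := by simp only [hyL]; linarith
    set N := min q (x + ε) with hN
    have hNx : x < N := lt_min hxq (by linarith)
    set yR := (x + N) / 2 with hyR
    have hyRq : yR < q := by
      have : N ≤ q := min_le_left _ _
      simp only [hyR]; linarith
    have hyRε : yR < x + ε := by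
      have : N ≤ x + ε := min_le_right _ _
      simp only [hyR]; linarith
    have hyRx : x < yR := by simp only [hyR]; linarith
    have hvalL : ∀ w ∈ Ioo p x, ∀ i', 1 ≤ i' → i' ≤ l → f^[n] w ≠ c i' := by
      intro w hw i' h1' h2' hfw
      have hwab : w ∈ Ioo a b := ⟨lt_of_le_of_lt hpa hw.1, hw.2.trans hxab.2⟩
      exact hpgap w (hmemF' w hwab ⟨i', h1', h2', hfw⟩) hw
    have hvalR : ∀ w ∈ Ioo x q, ∀ i', 1 ≤ i' → i' ≤ l → f^[n] w ≠ c i' := by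
      intro w hw i' h1' h2' hfw
      have hwab : w ∈ Ioo a b := ⟨hxab.1.trans hw.1, lt_of_lt_of_le hw.2 hqb⟩
      exact hqgap w (hmemF' w hwab ⟨i', h1', h2', hfw⟩) hw
    have hcontL : ContinuousOn (f^[n]) (Icc p x) :=
      (S.contIter n).mono (Icc_subset_Icc hpa hxab.2.le)
    have hcontR : ContinuousOn (f^[n]) (Icc x q) :=
      (S.contIter n).mono (Icc_subset_Icc hxab.1.le hqb)
    rcases hbr with ⟨hbl, hbr'⟩ | ⟨hbl, hbr'⟩
    · -- transversal increasing
      have hLmono : StrictMonoOn (f^[n]) (Icc p x) := by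
        rcases hmL with h | h
        · exact h
        · exfalso
          have h1' := h ⟨hyLp.le, hyLx.le⟩ ⟨hpx.le, le_rfl⟩ hyLx
          have h2' := hbl yL ⟨hyLε, hyLx⟩
          rw [hfx] at h1'; linarith
      have hRmono : StrictMonoOn (f^[n]) (Icc x q) := by
        rcases hmR with h | h
        · exact h
        · exfalso
          have h1' := h ⟨le_rfl, hxq.le⟩ ⟨hyRx.le, hyRq.le⟩ hyRx
          have h2' := hbr' yR ⟨hyRx, hyRε⟩
          rw [hfx] at h1'; linarith
      have hLlow : comL a c i ≤ f^[n] p := by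
        rcases eq_or_ne i 1 with h | h
        · rw [h, comL_one]; exact (S.mapsIter n ⟨hpa, hpx.le.trans hxab.2.le⟩).1
        · rw [comL_ne h]
          by_contra hcon
          push_neg at hcon
          have hci : c (i - 1) < c i := S.cmono (i - 1) i (by omega) (by omega) h2
          obtain ⟨w, hw, hfw⟩ := intermediate_value_Ioo hpx.le hcontL
            (by rw [hfx]; exact ⟨hcon, hci⟩)
          exact hvalL w hw (i - 1) (by omega) (by omega) hfw
      have hLmaps : MapsTo (f^[n]) (Icc p x) (Icc (comL a c i) (comR b l c i)) := by
        intro w hw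
        refine ⟨le_trans hLlow (hLmono.monotoneOn ⟨le_rfl, hpx.le⟩ hw hw.1), ?_⟩
        rw [comR_ne (by omega)]
        have := hLmono.monotoneOn hw ⟨hpx.le, le_rfl⟩ hw.2
        rwa [hfx] at this
      have hRhigh : f^[n] q ≤ comR b l c (i + 1) := by
        rcases eq_or_ne (i + 1) (l + 1) with h | h
        · rw [h, comR_last]; exact (S.mapsIter n ⟨hxab.1.le.trans hxq.le, hqb⟩).2
        · rw [comR_ne h]
          by_contra hcon
          push_neg at hcon
          have hci : c i < c (i + 1) := S.cmono i (i + 1) h1 (by omega) (by omega)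
          obtain ⟨w, hw, hfw⟩ := intermediate_value_Ioo hxq.le hcontR
            (by rw [hfx]; exact ⟨hci, hcon⟩)
          exact hvalR w hw (i + 1) (by omega) (by omega) hfw
      have hRmaps : MapsTo (f^[n]) (Icc x q) (Icc (comL a c (i + 1)) (comR b l c (i + 1))) := by
        intro w hw
        refine ⟨?_, le_trans (hRmono.monotoneOn hw ⟨hxq.le, le_rfl⟩ hw.2) hRhigh⟩
        rw [comL_ne (by omega)]
        have := hRmono.monotoneOn ⟨le_rfl, hxq.le⟩ hw hw.1
        rw [hfx] at this
        simpa using this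
      have hext' : IsExtr (f ∘ f^[n]) a b x := by
        rcases Nat.even_or_odd i with hpar | hpar
        · exact isExtr_of_mono_anti hpx hxq (Or.inr
            ⟨comp_mono_anti hLmaps hLmono (S.antic h1 (by omega) hpar),
             comp_mono_mono hRmaps hRmono (S.monoc (by omega) (by omega) (Even.add_one hpar))⟩)
        · exact isExtr_of_mono_anti hpx hxq (Or.inl
            ⟨comp_mono_mono hLmaps hLmono (S.monoc h1 (by omega) hpar),
             comp_mono_anti hRmaps hRmono (S.antic (by omega) (by omega) (Odd.add_one hpar))⟩)
      rw [Function.iterate_succ']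
      exact hext'
    · -- transversal decreasing
      have hLanti : StrictAntiOn (f^[n]) (Icc p x) := by
        rcases hmL with h | h
        · exfalso
          have h1' := h ⟨hyLp.le, hyLx.le⟩ ⟨hpx.le, le_rfl⟩ hyLx
          have h2' := hbl yL ⟨hyLε, hyLx⟩
          rw [hfx] at h1'; linarith
        · exact h
      have hRanti : StrictAntiOn (f^[n]) (Icc x q) := by
        rcases hmR with h | h
        · exfalso
          have h1' := h ⟨le_rfl, hxq.le⟩ ⟨hyRx.le, hyRq.le⟩ hyRx
          have h2' := hbr' yR ⟨hyRx, hyRε⟩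
          rw [hfx] at h1'; linarith
        · exact h
      have hup : c i < f^[n] p := by
        have := hLanti ⟨le_rfl, hpx.le⟩ ⟨hpx.le, le_rfl⟩ hpx
        rwa [hfx] at this
      have hq' : f^[n] q < c i := by
        have := hRanti ⟨le_rfl, hxq.le⟩ ⟨hxq.le, le_rfl⟩ hxq
        rwa [hfx] at this
      have hLhigh : f^[n] p ≤ comR b l c (i + 1) := by
        rcases eq_or_ne (i + 1) (l + 1) with h | h
        · rw [h, comR_last]; exact (S.mapsIter n ⟨hpa, hpx.le.trans hxab.2.le⟩).2
        · rw [comR_ne h]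
          by_contra hcon
          push_neg at hcon
          have hci : c i < c (i + 1) := S.cmono i (i + 1) h1 (by omega) (by omega)
          obtain ⟨w, hw, hfw⟩ := intermediate_value_Ioo' hpx.le hcontL
            (by rw [hfx]; exact ⟨hci, hcon⟩)
          exact hvalL w hw (i + 1) (by omega) (by omega) hfw
      have hLmaps : MapsTo (f^[n]) (Icc p x) (Icc (comL a c (i + 1)) (comR b l c (i + 1))) := by
        intro w hw
        refine ⟨?_, le_trans (hLanti.antitoneOn ⟨le_rfl, hpx.le⟩ hw hw.1) hLhigh⟩
        rw [comL_ne (by omega)]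
        have := hLanti.antitoneOn hw ⟨hpx.le, le_rfl⟩ hw.2
        rw [hfx] at this
        simpa using this
      have hRlow : comL a c i ≤ f^[n] q := by
        rcases eq_or_ne i 1 with h | h
        · rw [h, comL_one]; exact (S.mapsIter n ⟨hxab.1.le.trans hxq.le, hqb⟩).1
        · rw [comL_ne h]
          by_contra hcon
          push_neg at hcon
          have hci : c (i - 1) < c i := S.cmono (i - 1) i (by omega) (by omega) h2
          obtain ⟨w, hw, hfw⟩ := intermediate_value_Ioo' hxq.le hcontR
            (by rw [hfx]; exact ⟨hcon, hci⟩)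
          exact hvalR w hw (i - 1) (by omega) (by omega) hfw
      have hRmaps : MapsTo (f^[n]) (Icc x q) (Icc (comL a c i) (comR b l c i)) := by
        intro w hw
        refine ⟨le_trans hRlow (hRanti.antitoneOn hw ⟨hxq.le, le_rfl⟩ hw.2), ?_⟩
        rw [comR_ne (by omega)]
        have := hRanti.antitoneOn ⟨le_rfl, hxq.le⟩ hw hw.1
        rwa [hfx] at this
      have hext' : IsExtr (f ∘ f^[n]) a b x := by
        rcases Nat.even_or_odd i with hpar | hpar
        · exact isExtr_of_mono_anti hpx hxq (Or.inr
            ⟨comp_anti_mono hLmaps hLanti (S.monoc (by omega) (by omega) (Even.add_one hpar)),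
             comp_anti_anti hRmaps hRanti (S.antic h1 (by omega) hpar)⟩)
        · exact isExtr_of_mono_anti hpx hxq (Or.inl
            ⟨comp_anti_anti hLmaps hLanti (S.antic (by omega) (by omega) (Odd.add_one hpar)),
             comp_anti_mono hRmaps hRanti (S.monoc h1 (by omega) hpar)⟩)
      rw [Function.iterate_succ']
      exact hext'
  refine ⟨F ∪ C, ⟨?_, ?_, hmon', ?_⟩, ?_⟩
  · intro x hx
    rcases Finset.mem_union.mp hx with h | h
    · exact hG.hsub x h
    · exact hCab x h
  · intro x hx
    rcases Finset.mem_union.mp hx with h | h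
    · exact S.extr_step (hG.hsub x h) (hG.hext x h)
    · exact hextC x h
  · intro x hxab μ hμ i h1 h2 hfx
    rcases Nat.lt_succ_iff_lt_or_eq.mp hμ with h | h
    · exact Finset.mem_union_left _ (hG.hcov x hxab μ h i h1 h2 hfx)
    · exact hmemF' x hxab ⟨i, h1, h2, h ▸ hfx⟩
  · have hdFC : Disjoint F C := Finset.disjoint_left.mpr (fun {x} hxF hxC => hCF x hxC hxF)
    rw [Finset.card_union_of_disjoint hdFC]
    congr 1
    rw [hC, Finset.card_biUnion ?hdisj]
    · refine Finset.sum_congr rfl fun i hi => ?_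
      obtain ⟨h1, h2⟩ := Finset.mem_Icc.mp hi
      rw [← ZS hG h1 h2, Nat.card_coe_set_eq,
        Set.ncard_eq_toFinset_card _ (Zfin hG (c i))]
    case hdisj =>
      intro i hi j hj hij
      rw [Function.onFun, Finset.disjoint_left]
      intro x hxi hxj
      rw [Set.Finite.mem_toFinset] at hxi hxj
      obtain ⟨hi1, hi2⟩ := Finset.mem_Icc.mp hi
      obtain ⟨hj1, hj2⟩ := Finset.mem_Icc.mp hj
      have hceq : c i = c j := by rw [← hxi.2.2, hxj.2.2]
      rcases lt_or_gt_of_ne hij with h | h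
      · exact absurd hceq (ne_of_lt (S.cmono i j hi1 h hj2))
      · exact absurd hceq (ne_of_gt (S.cmono j i hj1 h hi2))

end Setup
end LapNumAux

namespace LapNumAux
open Set

namespace Setup

variable {a b : ℝ} {l : ℕ} {c : ℕ → ℝ} {f : ℝ → ℝ} (S : Setup a b l c f)
include S

lemma good_all (n : ℕ) : ∃ F : Finset ℝ, Good a b l c f n F ∧
    F.card = ∑ ν ∈ Finset.range n, ∑ i ∈ Finset.Icc 1 l,
      Nat.card (SimpleZeroSet f a b (c i) ν) := by
  induction n with
  | zero => exact ⟨∅, good_zero a b l c f, by simp⟩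
  | succ n ih =>
    obtain ⟨F, hG, hcard⟩ := ih
    obtain ⟨F', hG', hc'⟩ := S.good_step hG
    exact ⟨F', hG', by rw [hc', hcard, Finset.sum_range_succ]⟩

end Setup
end LapNumAux

end

/-- Eqn. (ln-main): the lap number of `f^n` satisfies `ℓ_n = ℓ_{n-1} + s_{n-1}`
and hence `ℓ_n = 1 + Σ_{ν<n} s_ν`, where `s_ν = Σ_i s_ν^i` counts the interior
simple zeros of `f^ν(x) - c_i`. -/
theorem lapNumber_eq_one_add_sum_simpleZeros (a b : ℝ) (l : ℕ) (c : ℕ → ℝ) (f : ℝ → ℝ)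
    (hab : a < b) (hl : 1 ≤ l)
    (hc : ∀ i, 1 ≤ i → i < l → c i < c (i + 1)) (hca : a < c 1) (hcb : c l < b)
    (hcont : ContinuousOn f (Set.Icc a b))
    (hmaps : Set.MapsTo f (Set.Icc a b) (Set.Icc a b))
    (hmono : ∀ j, 1 ≤ j → j ≤ l + 1 → Odd j → StrictMonoOn f (modalInterval a b l c j))
    (hanti : ∀ j, 1 ≤ j → j ≤ l + 1 → Even j → StrictAntiOn f (modalInterval a b l c j))
    (ℓ : ℕ → ℕ) (hlap : ∀ n, IsLapNumber (f^[n]) a b (ℓ n))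
    (s : ℕ → ℕ) (hs : ∀ ν, s ν = ∑ i ∈ Finset.Icc 1 l, Nat.card (SimpleZeroSet f a b (c i) ν))
    (n : ℕ) (hn : 1 ≤ n) :
    ℓ n = ℓ (n - 1) + s (n - 1) ∧ ℓ n = 1 + ∑ ν ∈ Finset.range n, s ν := by
  
  have S : LapNumAux.Setup a b l c f := ⟨hab, hl, hc, hca, hcb, hcont, hmaps, hmono, hanti⟩
  have key : ∀ m, ℓ m = 1 + ∑ ν ∈ Finset.range m, s ν := by
    intro m
    obtain ⟨F, hG, hcard⟩ := S.good_all m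
    have h1 := LapNumAux.lap_eq hab F hG.hsub hG.hext hG.hmon (hlap m)
    have h2 : ∑ ν ∈ Finset.range m, s ν = F.card := by
      rw [hcard]; exact Finset.sum_congr rfl fun ν _ => hs ν
    omega
  have h3 : ∑ ν ∈ Finset.range n, s ν = ∑ ν ∈ Finset.range (n - 1), s ν + s (n - 1) := by
    conv_lhs => rw [show n = (n - 1) + 1 by omega]
    rw [Finset.sum_range_succ]
  have h4 := key n
  have h5 := key (n - 1)
  exact ⟨by omega, h4⟩
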